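/- Let 0 < α < 1, β ≥ 0, c_u > 0, c_v > 0, and set u_n := c_u n^{−α} and v_n := c_v n^{−β} for n ≥ 1. Then: (i) there are positive constants c₀ and K such that for all n ≥ 1, Σ_{k=1}^{⌊n/2⌋} e^{−Σ_{j=k}^{n} u_j} u_k v_k ≤ K e^{−c₀ n^{1−α}}; and (ii) there is a positive constant K' such that for all n ≥ 1, Σ_{k=⌊n/2⌋+1}^{n} e^{−Σ_{j=k}^{n} u_j} u_k v_k ≤ K' v_n. -/

import Mathlib

open scoped BigOperators

/-- Telescoping bound: `∑_{k=a}^{b} e^{-S_k} u_k ≤ e^{-S_{b+1}} - e^{-S_a}` where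
`S_k = ∑_{j=k}^n u_j`, valid for nonnegative `u`, `a ≤ b+1`, `b ≤ n`. -/
lemma stmt_15_tel (u : ℕ → ℝ) (hu : ∀ j, 0 ≤ u j) (n : ℕ) :
    ∀ b : ℕ, b ≤ n → ∀ a : ℕ, a ≤ b + 1 →
      ∑ k ∈ Finset.Icc a b, Real.exp (-(∑ j ∈ Finset.Icc k n, u j)) * u k ≤
        Real.exp (-(∑ j ∈ Finset.Icc (b + 1) n, u j)) -
          Real.exp (-(∑ j ∈ Finset.Icc a n, u j)) := by
  have key : ∀ k : ℕ, k ≤ n →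
      Real.exp (-(∑ j ∈ Finset.Icc k n, u j)) * (1 + u k) ≤
        Real.exp (-(∑ j ∈ Finset.Icc (k + 1) n, u j)) := by
    intro k hk
    have hsplit : ∑ j ∈ Finset.Icc k n, u j = u k + ∑ j ∈ Finset.Icc (k + 1) n, u j := by
      rw [Finset.Icc_add_one_left_eq_Ioc, Finset.add_sum_Ioc_eq_sum_Icc hk]
    rw [hsplit, neg_add, Real.exp_add, mul_assoc]
    have h1 : Real.exp (-u k) * (1 + u k) ≤ 1 := by
      have hE : 0 < Real.exp (-u k) := Real.exp_pos _
      have h2 : Real.exp (-u k) * Real.exp (u k) = 1 := by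
        rw [← Real.exp_add]; simp
      nlinarith [Real.add_one_le_exp (u k)]
    calc Real.exp (-u k) * (Real.exp (-(∑ j ∈ Finset.Icc (k + 1) n, u j)) * (1 + u k))
        = Real.exp (-(∑ j ∈ Finset.Icc (k + 1) n, u j)) * (Real.exp (-u k) * (1 + u k)) := by
          ring
      _ ≤ Real.exp (-(∑ j ∈ Finset.Icc (k + 1) n, u j)) * 1 := by
          exact mul_le_mul_of_nonneg_left h1 (Real.exp_pos _).le
      _ = _ := mul_one _
  intro b
  induction b with
  | zero =>
    intro hn a ha
    interval_cases a
    · simp only [Finset.Icc_self, Finset.sum_singleton]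
      have := key 0 hn
      nlinarith [Real.exp_pos (-(∑ j ∈ Finset.Icc 0 n, u j)), hu 0,
        Real.exp_pos (-(∑ j ∈ Finset.Icc 1 n, u j))]
    · simp
  | succ b ih =>
    intro hn a ha
    rcases Nat.lt_or_ge a (b + 2) with h | h
    · have ha' : a ≤ b + 1 := Nat.lt_succ_iff.mp h
      rw [Finset.sum_Icc_succ_top ha']
      have h1 := ih (Nat.le_of_succ_le hn) a ha'
      have h2 := key (b + 1) hn
      nlinarith [Real.exp_pos (-(∑ j ∈ Finset.Icc (b + 1) n, u j)), hu (b + 1)]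
    · have : a = b + 2 := le_antisymm ha h
      subst this
      simp

theorem stmt_15 (α β cu cv : ℝ) (hα0 : 0 < α) (hα1 : α < 1) (hβ : 0 ≤ β)
    (hcu : 0 < cu) (hcv : 0 < cv) :
    (∃ c₀ K : ℝ, 0 < c₀ ∧ 0 < K ∧ ∀ n : ℕ, 1 ≤ n →
      ∑ k ∈ Finset.Icc 1 (n / 2),
        Real.exp (-(∑ j ∈ Finset.Icc k n, cu * (j : ℝ) ^ (-α))) *
          (cu * (k : ℝ) ^ (-α)) * (cv * (k : ℝ) ^ (-β)) ≤
        K * Real.exp (-c₀ * (n : ℝ) ^ (1 - α))) ∧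
    (∃ K' : ℝ, 0 < K' ∧ ∀ n : ℕ, 1 ≤ n →
      ∑ k ∈ Finset.Icc (n / 2 + 1) n,
        Real.exp (-(∑ j ∈ Finset.Icc k n, cu * (j : ℝ) ^ (-α))) *
          (cu * (k : ℝ) ^ (-α)) * (cv * (k : ℝ) ^ (-β)) ≤
        K' * (cv * (n : ℝ) ^ (-β))) := by
  have hu : ∀ j : ℕ, 0 ≤ cu * (j : ℝ) ^ (-α) := fun j =>
    mul_nonneg hcu.le (Real.rpow_nonneg (Nat.cast_nonneg j) _)
  constructor
  · -- part (i)
    set m : ℕ := ⌈1 / (1 - α)⌉₊ with hm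
    have h1α : 0 < 1 - α := by linarith
    have hmge : 1 ≤ (1 - α) * m := by
      have : 1 / (1 - α) ≤ (m : ℝ) := Nat.le_ceil _
      calc (1 : ℝ) = (1 - α) * (1 / (1 - α)) := by field_simp
        _ ≤ (1 - α) * m := by nlinarith
    refine ⟨cu / 4, cu * cv * (Nat.factorial m / (cu / 4) ^ m), by positivity, by positivity,
      fun n hn => ?_⟩
    have hnR : (1 : ℝ) ≤ (n : ℝ) := by exact_mod_cast hn
    have hnpos : (0 : ℝ) < n := by linarith
    set s : ℝ := (n : ℝ) ^ (1 - α) with hs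
    have hs1 : 1 ≤ s := Real.one_le_rpow hnR h1α.le
    have hspos : 0 < s := by linarith
    -- key bound: n ≤ (m! / (cu/4)^m) * exp ((cu/4) * s)
    have hn_le : (n : ℝ) ≤ (Nat.factorial m / (cu / 4) ^ m) * Real.exp (cu / 4 * s) := by
      have h1 : ((cu / 4) * s) ^ m / Nat.factorial m ≤ Real.exp (cu / 4 * s) :=
        Real.pow_div_factorial_le_exp _ (by positivity) m
      have h2 : (n : ℝ) ≤ s ^ m := by
        have : s ^ m = (n : ℝ) ^ ((1 - α) * m) := by
          rw [hs, ← Real.rpow_natCast ((n:ℝ) ^ (1 - α)) m, ← Real.rpow_mul hnpos.le]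
        rw [this]
        calc (n : ℝ) = (n : ℝ) ^ (1 : ℝ) := (Real.rpow_one _).symm
          _ ≤ (n : ℝ) ^ ((1 - α) * m) := Real.rpow_le_rpow_of_exponent_le hnR hmge
      have h3 : ((cu / 4) * s) ^ m = (cu / 4) ^ m * s ^ m := mul_pow _ _ _
      have hc4 : (0:ℝ) < (cu / 4) ^ m := by positivity
      calc (n : ℝ) ≤ s ^ m := h2
        _ = (Nat.factorial m / (cu / 4) ^ m) *
            (((cu / 4) * s) ^ m / Nat.factorial m) := by
            rw [h3]; field_simp
        _ ≤ (Nat.factorial m / (cu / 4) ^ m) * Real.exp (cu / 4 * s) := by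
            apply mul_le_mul_of_nonneg_left h1 (by positivity)
    -- each term is at most cu * cv * exp (-(cu/2) * s)
    have hterm : ∀ k ∈ Finset.Icc 1 (n / 2),
        Real.exp (-(∑ j ∈ Finset.Icc k n, cu * (j : ℝ) ^ (-α))) *
          (cu * (k : ℝ) ^ (-α)) * (cv * (k : ℝ) ^ (-β)) ≤
        Real.exp (-(cu / 2 * s)) * (cu * cv) := by
      intro k hk
      obtain ⟨hk1, hk2⟩ := Finset.mem_Icc.mp hk
      have hkR : (1 : ℝ) ≤ (k : ℝ) := by exact_mod_cast hk1
      -- S_k ≥ (cu/2) * s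
      have hS : cu / 2 * s ≤ ∑ j ∈ Finset.Icc k n, cu * (j : ℝ) ^ (-α) := by
        have hsub : Finset.Icc (n / 2 + 1) n ⊆ Finset.Icc k n := by
          apply Finset.Icc_subset_Icc (by omega) le_rfl
        have h4 : ∑ j ∈ Finset.Icc (n / 2 + 1) n, cu * (j : ℝ) ^ (-α) ≤
            ∑ j ∈ Finset.Icc k n, cu * (j : ℝ) ^ (-α) :=
          Finset.sum_le_sum_of_subset_of_nonneg hsub (fun j _ _ => hu j)
        refine le_trans ?_ h4
        have h5 : ∀ j ∈ Finset.Icc (n / 2 + 1) n,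
            cu * (n : ℝ) ^ (-α) ≤ cu * (j : ℝ) ^ (-α) := by
          intro j hj
          obtain ⟨hj1, hj2⟩ := Finset.mem_Icc.mp hj
          have hjpos : (0 : ℝ) < j := by
            have : 1 ≤ j := by omega
            exact_mod_cast this
          exact mul_le_mul_of_nonneg_left
            (Real.rpow_le_rpow_of_nonpos hjpos (by exact_mod_cast hj2) (by linarith)) hcu.le
        have h6 : (Finset.Icc (n / 2 + 1) n).card • (cu * (n : ℝ) ^ (-α)) ≤
            ∑ j ∈ Finset.Icc (n / 2 + 1) n, cu * (j : ℝ) ^ (-α) :=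
          Finset.card_nsmul_le_sum _ _ _ h5
        have hcard : (Finset.Icc (n / 2 + 1) n).card = n - n / 2 := by
          rw [Nat.card_Icc]; omega
        rw [hcard] at h6
        refine le_trans ?_ h6
        have hhalf : (n : ℝ) / 2 ≤ ((n - n / 2 : ℕ) : ℝ) := by
          have h7 : ((n / 2 : ℕ) : ℝ) ≤ (n : ℝ) / 2 := Nat.cast_div_le
          have h8 : ((n - n / 2 : ℕ) : ℝ) = (n : ℝ) - ((n / 2 : ℕ) : ℝ) := by
            have : n / 2 ≤ n := Nat.div_le_self n 2
            push_cast [Nat.cast_sub this]; ring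
          rw [h8]; linarith
        have h9 : cu / 2 * s = (n : ℝ) / 2 * (cu * (n : ℝ) ^ (-α)) := by
          rw [hs]
          have h10 : (n : ℝ) ^ (1 - α) = (n : ℝ) ^ (1:ℝ) * (n : ℝ) ^ (-α) := by
            rw [← Real.rpow_add hnpos, sub_eq_add_neg]
          rw [h10, Real.rpow_one]; ring
        rw [h9, nsmul_eq_mul]
        exact mul_le_mul_of_nonneg_right hhalf (hu n)
      have hE : Real.exp (-(∑ j ∈ Finset.Icc k n, cu * (j : ℝ) ^ (-α))) ≤
          Real.exp (-(cu / 2 * s)) := Real.exp_le_exp.mpr (by linarith)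
      have hkα : (k : ℝ) ^ (-α) ≤ 1 := by
        rw [← Real.one_rpow (-α)]
        exact Real.rpow_le_rpow_of_nonpos one_pos hkR (by linarith)
      have hkβ : (k : ℝ) ^ (-β) ≤ 1 := by
        rw [← Real.one_rpow (-β)]
        exact Real.rpow_le_rpow_of_nonpos one_pos hkR (by linarith)
      have hx1 : cu * (k : ℝ) ^ (-α) ≤ cu := by nlinarith
      have hx2 : cv * (k : ℝ) ^ (-β) ≤ cv := by nlinarith
      have hEpos := Real.exp_pos (-(∑ j ∈ Finset.Icc k n, cu * (j : ℝ) ^ (-α)))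
      calc Real.exp (-(∑ j ∈ Finset.Icc k n, cu * (j : ℝ) ^ (-α))) *
            (cu * (k : ℝ) ^ (-α)) * (cv * (k : ℝ) ^ (-β))
          ≤ Real.exp (-(cu / 2 * s)) * (cu * (k : ℝ) ^ (-α)) * (cv * (k : ℝ) ^ (-β)) := by
            have h0 := hu k
            have h0' : 0 ≤ cv * (k : ℝ) ^ (-β) :=
              mul_nonneg hcv.le (Real.rpow_nonneg (Nat.cast_nonneg k) _)
            exact mul_le_mul_of_nonneg_right (mul_le_mul_of_nonneg_right hE h0) h0'
        _ ≤ Real.exp (-(cu / 2 * s)) * cu * (cv * (k : ℝ) ^ (-β)) := by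
            have h0' : 0 ≤ cv * (k : ℝ) ^ (-β) :=
              mul_nonneg hcv.le (Real.rpow_nonneg (Nat.cast_nonneg k) _)
            exact mul_le_mul_of_nonneg_right
              (mul_le_mul_of_nonneg_left hx1 (Real.exp_pos _).le) h0'
        _ ≤ Real.exp (-(cu / 2 * s)) * cu * cv :=
            mul_le_mul_of_nonneg_left hx2 (by positivity)
        _ = Real.exp (-(cu / 2 * s)) * (cu * cv) := by ring
    calc ∑ k ∈ Finset.Icc 1 (n / 2),
          Real.exp (-(∑ j ∈ Finset.Icc k n, cu * (j : ℝ) ^ (-α))) *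
            (cu * (k : ℝ) ^ (-α)) * (cv * (k : ℝ) ^ (-β))
        ≤ ∑ _k ∈ Finset.Icc 1 (n / 2), Real.exp (-(cu / 2 * s)) * (cu * cv) :=
          Finset.sum_le_sum hterm
      _ = (Finset.Icc 1 (n / 2)).card * (Real.exp (-(cu / 2 * s)) * (cu * cv)) := by
          rw [Finset.sum_const, nsmul_eq_mul]
      _ ≤ (n : ℝ) * (Real.exp (-(cu / 2 * s)) * (cu * cv)) := by
          apply mul_le_mul_of_nonneg_right _ (by positivity)
          have : (Finset.Icc 1 (n / 2)).card ≤ n := by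
            rw [Nat.card_Icc]; omega
          exact_mod_cast this
      _ ≤ ((Nat.factorial m / (cu / 4) ^ m) * Real.exp (cu / 4 * s)) *
            (Real.exp (-(cu / 2 * s)) * (cu * cv)) := by
          apply mul_le_mul_of_nonneg_right hn_le (by positivity)
      _ = cu * cv * (Nat.factorial m / (cu / 4) ^ m) *
            (Real.exp (cu / 4 * s) * Real.exp (-(cu / 2 * s))) := by ring
      _ = cu * cv * (Nat.factorial m / (cu / 4) ^ m) * Real.exp (-(cu / 4) * s) := by
          rw [← Real.exp_add]; ring_nf
  · -- part (ii)
    refine ⟨(2 : ℝ) ^ β, by positivity, fun n hn => ?_⟩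
    have hnR : (1 : ℝ) ≤ (n : ℝ) := by exact_mod_cast hn
    have hnpos : (0 : ℝ) < n := by linarith
    have hnβ : (0:ℝ) ≤ (n : ℝ) ^ (-β) := Real.rpow_nonneg hnpos.le _
    -- bound v_k ≤ 2^β * cv * n^{-β} for k ≥ n/2+1
    have hterm : ∀ k ∈ Finset.Icc (n / 2 + 1) n,
        Real.exp (-(∑ j ∈ Finset.Icc k n, cu * (j : ℝ) ^ (-α))) *
          (cu * (k : ℝ) ^ (-α)) * (cv * (k : ℝ) ^ (-β)) ≤
        (Real.exp (-(∑ j ∈ Finset.Icc k n, cu * (j : ℝ) ^ (-α))) *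
          (cu * (k : ℝ) ^ (-α))) * ((2 : ℝ) ^ β * cv * (n : ℝ) ^ (-β)) := by
      intro k hk
      obtain ⟨hk1, hk2⟩ := Finset.mem_Icc.mp hk
      have hkpos : (0 : ℝ) < k := by
        have : 1 ≤ k := by omega
        exact_mod_cast this
      have h2k : (n : ℝ) ≤ 2 * k := by
        have : n ≤ 2 * k := by omega
        exact_mod_cast this
      have hkey : (k : ℝ) ^ (-β) ≤ (2 : ℝ) ^ β * (n : ℝ) ^ (-β) := by
        have h1 : (n : ℝ) ^ β ≤ (2 * k : ℝ) ^ β :=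
          Real.rpow_le_rpow hnpos.le h2k hβ
        have h2 : ((2 : ℝ) * k) ^ β = 2 ^ β * (k : ℝ) ^ β :=
          Real.mul_rpow (by norm_num) hkpos.le
        have hkβpos : (0 : ℝ) < (k : ℝ) ^ β := Real.rpow_pos_of_pos hkpos _
        have hnβpos : (0 : ℝ) < (n : ℝ) ^ β := Real.rpow_pos_of_pos hnpos _
        rw [Real.rpow_neg hkpos.le, Real.rpow_neg hnpos.le]
        rw [h2] at h1
        rw [inv_le_iff_one_le_mul₀ hkβpos]
        calc (1:ℝ) = ((n:ℝ) ^ β)⁻¹ * (n:ℝ) ^ β := by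
              field_simp
          _ ≤ ((n:ℝ) ^ β)⁻¹ * (2 ^ β * (k : ℝ) ^ β) := by
              apply mul_le_mul_of_nonneg_left h1 (by positivity)
          _ = 2 ^ β * ((n:ℝ) ^ β)⁻¹ * (k:ℝ) ^ β := by ring
      have hnn : 0 ≤ Real.exp (-(∑ j ∈ Finset.Icc k n, cu * (j : ℝ) ^ (-α))) *
          (cu * (k : ℝ) ^ (-α)) :=
        mul_nonneg (Real.exp_pos _).le (hu k)
      calc Real.exp (-(∑ j ∈ Finset.Icc k n, cu * (j : ℝ) ^ (-α))) *
            (cu * (k : ℝ) ^ (-α)) * (cv * (k : ℝ) ^ (-β))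
          ≤ Real.exp (-(∑ j ∈ Finset.Icc k n, cu * (j : ℝ) ^ (-α))) *
            (cu * (k : ℝ) ^ (-α)) * (cv * ((2:ℝ) ^ β * (n : ℝ) ^ (-β))) := by
            apply mul_le_mul_of_nonneg_left _ hnn
            exact mul_le_mul_of_nonneg_left hkey hcv.le
        _ = (Real.exp (-(∑ j ∈ Finset.Icc k n, cu * (j : ℝ) ^ (-α))) *
            (cu * (k : ℝ) ^ (-α))) * ((2 : ℝ) ^ β * cv * (n : ℝ) ^ (-β)) := by ring
    have htel := stmt_15_tel (fun j => cu * (j : ℝ) ^ (-α)) hu n n le_rfl (n / 2 + 1)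
      (by omega)
    have htel2 : ∑ k ∈ Finset.Icc (n / 2 + 1) n,
        Real.exp (-(∑ j ∈ Finset.Icc k n, cu * (j : ℝ) ^ (-α))) *
          (cu * (k : ℝ) ^ (-α)) ≤ 1 := by
      refine le_trans htel ?_
      have h1 : Finset.Icc (n + 1) n = ∅ := by
        rw [Finset.Icc_eq_empty_iff]; omega
      rw [h1]
      simp only [Finset.sum_empty, neg_zero, Real.exp_zero]
      have := Real.exp_pos (-(∑ j ∈ Finset.Icc (n / 2 + 1) n, cu * (j : ℝ) ^ (-α)))
      linarith
    calc ∑ k ∈ Finset.Icc (n / 2 + 1) n,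
          Real.exp (-(∑ j ∈ Finset.Icc k n, cu * (j : ℝ) ^ (-α))) *
            (cu * (k : ℝ) ^ (-α)) * (cv * (k : ℝ) ^ (-β))
        ≤ ∑ k ∈ Finset.Icc (n / 2 + 1) n,
            (Real.exp (-(∑ j ∈ Finset.Icc k n, cu * (j : ℝ) ^ (-α))) *
              (cu * (k : ℝ) ^ (-α))) * ((2 : ℝ) ^ β * cv * (n : ℝ) ^ (-β)) :=
          Finset.sum_le_sum hterm
      _ = (∑ k ∈ Finset.Icc (n / 2 + 1) n,
            Real.exp (-(∑ j ∈ Finset.Icc k n, cu * (j : ℝ) ^ (-α))) *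
              (cu * (k : ℝ) ^ (-α))) * ((2 : ℝ) ^ β * cv * (n : ℝ) ^ (-β)) := by
          rw [← Finset.sum_mul]
      _ ≤ 1 * ((2 : ℝ) ^ β * cv * (n : ℝ) ^ (-β)) := by
          apply mul_le_mul_of_nonneg_right htel2 (by positivity)
      _ = (2 : ℝ) ^ β * (cv * (n : ℝ) ^ (-β)) := by ring
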